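/- For integers 1 ≤ n_1 ≤ n_2 define P_{(n_1,n_2)}(t) = ∑_{i=1}^{n_1} i(t^{4i−2}+t^{4i−4}) + ∑_{i=2n_1}^{n_1+n_2−1} (2n_1+1)t^{2i} + ∑_{i=n_1+n_2}^{2n_1+n_2−1} 4(2n_1+n_2−i)t^{2i} + t^{4n_1+2n_2} ∈ ℤ[t]. Then in the formal power series ring ℤ[t][[S]] one has: ∑_{n=1}^{∞} P_{(n,n)}(t)·S^{n} = (t²+1)S · [(1−S)(1−t⁴S)²]^{−1} + 4t⁴S · [(1−t⁴S)²(1−t⁶S)]^{−1} + t⁶S · (1−t⁶S)^{−1}. -/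

import Mathlib

open Finset

/-- The Poincaré polynomial `P_{(n₁,n₂)}(t)` of the fundamental domain `F_γ` for `GL₃`
with root valuation `(n₁, n₂)`, `n₁ ≤ n₂`. -/
noncomputable def gl3PoincarePoly (n₁ n₂ : ℕ) : Polynomial ℤ :=
  ∑ i ∈ Icc 1 n₁, (i : Polynomial ℤ) *
      (Polynomial.X ^ (4 * i - 2) + Polynomial.X ^ (4 * i - 4))
  + ∑ i ∈ Icc (2 * n₁) (n₁ + n₂ - 1),
      ((2 * n₁ + 1 : ℕ) : Polynomial ℤ) * Polynomial.X ^ (2 * i)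
  + ∑ i ∈ Icc (n₁ + n₂) (2 * n₁ + n₂ - 1),
      ((4 * (2 * n₁ + n₂ - i) : ℕ) : Polynomial ℤ) * Polynomial.X ^ (2 * i)
  + Polynomial.X ^ (4 * n₁ + 2 * n₂)

/-- The constant `t`-polynomial viewed in `ℤ[t][[S]]`. -/
noncomputable def gl3Cs (p : Polynomial ℤ) : PowerSeries (Polynomial ℤ) :=
  PowerSeries.C p

/-- The variable `S` of `ℤ[t][[S]]`. -/
noncomputable def gl3S : PowerSeries (Polynomial ℤ) := PowerSeries.X

namespace Gl3Aux

noncomputable section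

abbrev R := Polynomial ℤ

/-- `1 - a·S`. -/
def bin (a : R) : PowerSeries R := 1 - PowerSeries.C a * PowerSeries.X

lemma coeff_mul_bin_zero (g : PowerSeries R) (a : R) :
    PowerSeries.coeff 0 (g * bin a) = PowerSeries.coeff 0 g := by
  simp [bin, mul_sub, mul_comm, mul_assoc]

lemma coeff_mul_bin_succ (g : PowerSeries R) (a : R) (n : ℕ) :
    PowerSeries.coeff (n+1) (g * bin a)
      = PowerSeries.coeff (n+1) g - a * PowerSeries.coeff n g := by
  have h : g * (PowerSeries.C a * PowerSeries.X)
      = PowerSeries.C a * (g * PowerSeries.X) := by ring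
  rw [bin, mul_sub, mul_one, map_sub, h, PowerSeries.coeff_C_mul,
    PowerSeries.coeff_succ_mul_X]

lemma constantCoeff_bin (a : R) : PowerSeries.constantCoeff (bin a) = 1 := by
  simp [bin]

lemma cancel_invOfUnit (u g x : PowerSeries R)
    (hu : PowerSeries.constantCoeff u = 1) (h : g * u = x) :
    x * PowerSeries.invOfUnit u 1 = g := by
  rw [← h, mul_assoc, PowerSeries.mul_invOfUnit u 1 (by simpa using hu), mul_one]

/-- first sum of `P_{(n,n)}`. -/
def q1 (n : ℕ) : R :=
  ∑ i ∈ Icc 1 n, (i : R) * (Polynomial.X ^ (4 * i - 2) + Polynomial.X ^ (4 * i - 4))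

/-- third sum of `P_{(n,n)}`, verbatim. -/
def q2 (n : ℕ) : R :=
  ∑ i ∈ Icc (n + n) (2 * n + n - 1),
    ((4 * (2 * n + n - i) : ℕ) : R) * Polynomial.X ^ (2 * i)

/-- clean form of `q2`. -/
def q2' (n : ℕ) : R :=
  ∑ i ∈ Icc (2 * n) (3 * n - 1), ((4 * (3 * n - i) : ℕ) : R) * Polynomial.X ^ (2 * i)

lemma q2_eq (n : ℕ) : q2 n = q2' n := by
  simp only [q2, q2', show n + n = 2 * n by omega, show 2 * n + n = 3 * n by omega]

def g1 : PowerSeries R := PowerSeries.mk fun n => if 1 ≤ n then q1 n else 0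

def h1 : PowerSeries R :=
  PowerSeries.mk fun n =>
    (n : R) * (Polynomial.X ^ (4 * n - 2) + Polynomial.X ^ (4 * n - 4))

def h1' : PowerSeries R :=
  PowerSeries.mk fun n =>
    if 1 ≤ n then Polynomial.X ^ (4 * n - 2) + Polynomial.X ^ (4 * n - 4) else 0

def g2 : PowerSeries R := PowerSeries.mk fun n => if 1 ≤ n then q2' n else 0

def h2 : PowerSeries R :=
  PowerSeries.mk fun n => (4 : R) * (n : R) * Polynomial.X ^ (4 * n)

def h2' : PowerSeries R :=
  PowerSeries.mk fun n => if 1 ≤ n then (4 : R) * Polynomial.X ^ (4 * n) else 0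

def g3 : PowerSeries R := PowerSeries.mk fun n => if 1 ≤ n then Polynomial.X ^ (6 * n) else 0

lemma q1_succ (n : ℕ) :
    q1 (n + 1) = q1 n + ((n + 1 : ℕ) : R) *
      (Polynomial.X ^ (4 * (n + 1) - 2) + Polynomial.X ^ (4 * (n + 1) - 4)) := by
  exact Finset.sum_Icc_succ_top (by omega) _

lemma q2'_succ (n : ℕ) :
    q2' (n + 1) = Polynomial.X ^ 6 * q2' n
      + (4 : R) * ((n : R) + 1) * Polynomial.X ^ (4 * n + 4) := by
  rcases n with _ | m
  · simp [q2']
  · simp only [q2',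
      show 2 * (m + 1 + 1) = 2 * m + 4 by omega,
      show 3 * (m + 1 + 1) - 1 = 3 * m + 5 by omega,
      show 3 * m + 6 - 1 = 3 * m + 5 by omega,
      show 3 * m + 3 - 1 = 3 * m + 2 by omega,
      show 3 * (m + 1 + 1) = 3 * m + 6 by omega,
      show 2 * (m + 1) = 2 * m + 2 by omega,
      show 3 * (m + 1) - 1 = 3 * m + 2 by omega,
      show 3 * (m + 1) = 3 * m + 3 by omega]
    rw [show Icc (2 * m + 4) (3 * m + 5)
        = insert (2 * m + 4) (Icc (2 * m + 4 + 1) (3 * m + 5)) from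
        (Finset.insert_Icc_add_one_left_eq_Icc (by omega)).symm,
      Finset.sum_insert (by simp)]
    rw [show (2 * m + 4 + 1) = (2 * m + 2) + 3 by omega,
      show (3 * m + 5) = (3 * m + 2) + 3 by omega,
      ← Finset.map_add_right_Icc, Finset.sum_map, Finset.mul_sum]
    rw [add_comm]
    refine congrArg₂ (· + ·) ?_ ?_
    · apply Finset.sum_congr rfl
      intro i _
      simp only [addRightEmbedding_apply]
      rw [show 3 * m + 6 - (i + 3) = 3 * m + 3 - i by omega,
        show 2 * (i + 3) = 2 * i + 6 by omega]
      ring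
    · rw [show 3 * m + 6 - (2 * m + 4) = m + 2 by omega,
        show 2 * (2 * m + 4) = 4 * (m + 1) + 4 by omega]
      push_cast
      ring

lemma G1a : g1 * bin 1 = h1 := by
  ext n
  rcases n with _ | n
  · simp [coeff_mul_bin_zero, g1, h1]
  · rw [coeff_mul_bin_succ]
    simp only [g1, h1, PowerSeries.coeff_mk]
    rcases n with _ | n
    · simp [q1]
    · rw [if_pos (by omega), if_pos (by omega), q1_succ, one_mul]
      push_cast
      ring
  -- done

lemma G1b : h1 * bin (Polynomial.X ^ 4) = h1' := by
  ext n
  rcases n with _ | n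
  · simp [coeff_mul_bin_zero, h1, h1']
  · rw [coeff_mul_bin_succ]
    simp only [h1, h1', PowerSeries.coeff_mk, if_pos (Nat.one_le_iff_ne_zero.2 (Nat.succ_ne_zero n))]
    rcases n with _ | n
    · norm_num
    · rw [show 4 * (n + 1 + 1) - 2 = 4 * n + 6 by omega,
        show 4 * (n + 1 + 1) - 4 = 4 * n + 4 by omega,
        show 4 * (n + 1) - 2 = 4 * n + 2 by omega,
        show 4 * (n + 1) - 4 = 4 * n by omega]
      push_cast
      ring

lemma G1c : h1' * bin (Polynomial.X ^ 4)
    = PowerSeries.C (Polynomial.X ^ 2 + 1) * PowerSeries.X := by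
  ext n
  rcases n with _ | n
  · simp [coeff_mul_bin_zero, h1']
  · rw [coeff_mul_bin_succ]
    simp only [h1', PowerSeries.coeff_mk, PowerSeries.coeff_C_mul, PowerSeries.coeff_X]
    rcases n with _ | n
    · norm_num
    · rw [if_pos (by omega), if_pos (by omega), if_neg (by omega)]
      rw [show 4 * (n + 1 + 1) - 2 = 4 * n + 6 by omega,
        show 4 * (n + 1 + 1) - 4 = 4 * n + 4 by omega,
        show 4 * (n + 1) - 2 = 4 * n + 2 by omega,
        show 4 * (n + 1) - 4 = 4 * n by omega]
      ring

lemma G2a : g2 * bin (Polynomial.X ^ 6) = h2 := by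
  ext n
  rcases n with _ | n
  · simp [coeff_mul_bin_zero, g2, h2]
  · rw [coeff_mul_bin_succ]
    simp only [g2, h2, PowerSeries.coeff_mk]
    rcases n with _ | n
    · simp [q2']
    · rw [if_pos (by omega), if_pos (by omega), q2'_succ]
      push_cast
      ring

lemma G2b : h2 * bin (Polynomial.X ^ 4) = h2' := by
  ext n
  rcases n with _ | n
  · simp [coeff_mul_bin_zero, h2, h2']
  · rw [coeff_mul_bin_succ]
    simp only [h2, h2', PowerSeries.coeff_mk, if_pos (Nat.one_le_iff_ne_zero.2 (Nat.succ_ne_zero n))]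
    push_cast
    ring

lemma G2c : h2' * bin (Polynomial.X ^ 4)
    = PowerSeries.C (4 * Polynomial.X ^ 4) * PowerSeries.X := by
  ext n
  rcases n with _ | n
  · simp [coeff_mul_bin_zero, h2']
  · rw [coeff_mul_bin_succ]
    simp only [h2', PowerSeries.coeff_mk, PowerSeries.coeff_C_mul, PowerSeries.coeff_X]
    rcases n with _ | n
    · norm_num
    · rw [if_pos (by omega), if_pos (by omega), if_neg (by omega)]
      ring

lemma G3 : g3 * bin (Polynomial.X ^ 6)
    = PowerSeries.C (Polynomial.X ^ 6) * PowerSeries.X := by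
  ext n
  rcases n with _ | n
  · simp [coeff_mul_bin_zero, g3]
  · rw [coeff_mul_bin_succ]
    simp only [g3, PowerSeries.coeff_mk, PowerSeries.coeff_C_mul, PowerSeries.coeff_X]
    rcases n with _ | n
    · norm_num
    · rw [if_pos (by omega), if_pos (by omega), if_neg (by omega)]
      ring

end

end Gl3Aux

open Gl3Aux in
theorem gl3_generating_series_diagonal :
    ∀ n : ℕ,
      PowerSeries.coeff n
        (gl3Cs (Polynomial.X ^ 2 + 1) * gl3S *
            PowerSeries.invOfUnit
              ((1 - gl3S) * (1 - gl3Cs (Polynomial.X ^ 4) * gl3S) ^ 2) 1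
          + 4 * (gl3Cs (Polynomial.X ^ 4) * gl3S) *
            PowerSeries.invOfUnit
              ((1 - gl3Cs (Polynomial.X ^ 4) * gl3S) ^ 2 *
                (1 - gl3Cs (Polynomial.X ^ 6) * gl3S)) 1
          + gl3Cs (Polynomial.X ^ 6) * gl3S *
            PowerSeries.invOfUnit (1 - gl3Cs (Polynomial.X ^ 6) * gl3S) 1)
      = if 1 ≤ n then gl3PoincarePoly n n else 0 := by
  intro n
  have hb1 : (1 - gl3S) = bin 1 := by simp [bin, gl3S]
  have hb4 : (1 - gl3Cs (Polynomial.X ^ 4) * gl3S) = bin (Polynomial.X ^ 4) := by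
    simp [bin, gl3Cs, gl3S]
  have hb6 : (1 - gl3Cs (Polynomial.X ^ 6) * gl3S) = bin (Polynomial.X ^ 6) := by
    simp [bin, gl3Cs, gl3S]
  have E1 : gl3Cs (Polynomial.X ^ 2 + 1) * gl3S *
      PowerSeries.invOfUnit
        ((1 - gl3S) * (1 - gl3Cs (Polynomial.X ^ 4) * gl3S) ^ 2) 1 = g1 := by
    rw [hb1, hb4]
    apply cancel_invOfUnit
    · simp [constantCoeff_bin, map_mul, map_pow]
    · have : g1 * (bin 1 * bin (Polynomial.X ^ 4) ^ 2)
          = g1 * bin 1 * bin (Polynomial.X ^ 4) * bin (Polynomial.X ^ 4) := by ring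
      rw [this, G1a, G1b, G1c]
      rfl
  have E2 : 4 * (gl3Cs (Polynomial.X ^ 4) * gl3S) *
      PowerSeries.invOfUnit
        ((1 - gl3Cs (Polynomial.X ^ 4) * gl3S) ^ 2 *
          (1 - gl3Cs (Polynomial.X ^ 6) * gl3S)) 1 = g2 := by
    rw [hb4, hb6]
    apply cancel_invOfUnit
    · simp [constantCoeff_bin, map_mul, map_pow]
    · have : g2 * (bin (Polynomial.X ^ 4) ^ 2 * bin (Polynomial.X ^ 6))
          = g2 * bin (Polynomial.X ^ 6) * bin (Polynomial.X ^ 4)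
              * bin (Polynomial.X ^ 4) := by ring
      rw [this, G2a, G2b, G2c]
      show PowerSeries.C (4 * Polynomial.X ^ 4) * PowerSeries.X
          = 4 * (PowerSeries.C (Polynomial.X ^ 4) * PowerSeries.X)
      rw [map_mul, map_ofNat]
      ring
  have E3 : gl3Cs (Polynomial.X ^ 6) * gl3S *
      PowerSeries.invOfUnit (1 - gl3Cs (Polynomial.X ^ 6) * gl3S) 1 = g3 := by
    rw [hb6]
    apply cancel_invOfUnit
    · simp [constantCoeff_bin]
    · rw [G3]; rfl
  rw [E1, E2, E3, map_add, map_add]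
  simp only [g1, g2, g3, PowerSeries.coeff_mk]
  rcases n with _ | n
  · norm_num
  · rw [if_pos (by omega), if_pos (by omega), if_pos (by omega), if_pos (by omega)]
    rw [gl3PoincarePoly, ← q2_eq]
    rw [show Icc (2 * (n+1)) ((n+1) + (n+1) - 1) = ∅ from Finset.Icc_eq_empty (by omega)]
    rw [Finset.sum_empty]
    rw [show 4 * (n+1) + 2 * (n+1) = 6 * (n+1) by omega]
    show q1 (n+1) + q2 (n+1) + Polynomial.X ^ (6 * (n+1))
        = q1 (n+1) + 0 + q2 (n+1) + Polynomial.X ^ (6 * (n+1))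
    ring
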